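/- Let (Mⁿ, g) be a complete Riemannian manifold with nonnegative Ricci curvature, viewed as a static super Ricci flow (so the reduced distance from (p,0) is ℓ(x, τ) = d(x,p)²/(4τ), K(x,τ) = (4πτ)^{−n/2} e^{−ℓ(x,τ)}, and H ≡ 0). Then for all r > 0, I_{(p,0)}(r) = (1/rⁿ) ∫₀^{r²/(4π)} (n/(2τ)) Vol B(p, √(2nτ log(r²/(4πτ)))) dτ, and consequently lim_{r→∞} I_{(p,0)}(r) = ν(g), the asymptotic volume ratio. -/

import Mathlib

open Real Set Metric MeasureTheory Filter

/-- The local quantity `I_{(p,0)}(r)` of a nonnegatively-Ricci-curved manifold viewed as a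
static super Ricci flow: since `ℓ(x,τ) = d(x,p)²/(4τ)`, `K(x,τ) = (4πτ)^{−n/2} e^{−ℓ}`, `H ≡ 0`,
and `|∇log K|² − ∂_τ log K = n/(2τ)`, we have
`I(r) = (1/rⁿ) ∫_{E_r} n/(2τ) dμ dτ`, with time-slices of the pseudo heat ball being
metric balls. -/
noncomputable def staticI {M : Type*} [MetricSpace M] [MeasurableSpace M]
    (n : ℕ) (μ : Measure M) (p : M) (r : ℝ) : ℝ :=
  (1 / r^n) * ∫ τ in Ioi (0:ℝ), ((n:ℝ) / (2 * τ)) *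
    (μ {x : M | r ^ (-(n:ℝ)) < (4 * π * τ) ^ (-(n:ℝ)/2)
        * Real.exp (-(dist x p)^2 / (4 * τ))}).toReal

lemma exp_neg_image_Ioi : (fun t : ℝ => Real.exp (-t)) '' Ioi (0:ℝ) = Ioo 0 1 := by
  ext y
  constructor
  · rintro ⟨t, ht, rfl⟩
    exact ⟨Real.exp_pos _, by rwa [Real.exp_lt_one_iff, neg_lt_zero]⟩
  · rintro ⟨h0, h1⟩
    exact ⟨-Real.log y, by simpa using Real.log_neg h0 h1, by simp [Real.exp_log h0]⟩

lemma key_integral (s : ℝ) (hs : 0 < s) :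
    IntegrableOn (fun u : ℝ => u ^ (s-1) * (-Real.log u) ^ s) (Ioo (0:ℝ) 1) ∧
    ∫ u in Ioo (0:ℝ) 1, u ^ (s-1) * (-Real.log u) ^ s = (1/s) ^ (s+1) * Real.Gamma (s+1) := by
  set φ : ℝ → ℝ := fun u => u ^ (s-1) * (-Real.log u) ^ s with hφ
  have hf' : ∀ t ∈ Ioi (0:ℝ), HasDerivWithinAt (fun t : ℝ => Real.exp (-t))
      (-Real.exp (-t)) (Ioi (0:ℝ)) t := by
    intro t _
    simpa [Function.comp_def] using ((Real.hasDerivAt_exp (-t)).comp t (hasDerivAt_neg t)).hasDerivWithinAt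
  have hinj : InjOn (fun t : ℝ => Real.exp (-t)) (Ioi 0) :=
    fun a _ b _ h => by simpa using Real.exp_injective h
  have hpt : ∀ t ∈ Ioi (0:ℝ),
      |(-Real.exp (-t))| • φ (Real.exp (-t)) = t ^ ((s+1)-1) * Real.exp (-(s*t)) := by
    intro t ht
    have h1 : (Real.exp (-t)) ^ (s-1) = Real.exp (-t * (s-1)) := by
      rw [Real.rpow_def_of_pos (Real.exp_pos _), Real.log_exp]
    have h2 : -Real.log (Real.exp (-t)) = t := by simp
    simp only [smul_eq_mul, hφ, h1, h2, abs_neg, abs_of_pos (Real.exp_pos _)]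
    rw [show s+1-1 = s from by ring, ← mul_assoc, ← Real.exp_add]
    ring_nf
  have hint : IntegrableOn (fun t : ℝ => t ^ ((s+1)-1) * Real.exp (-(s*t))) (Ioi 0) := by
    have h0 := Real.GammaIntegral_convergent (by linarith : (0:ℝ) < s + 1)
    have h1 := (integrableOn_Ioi_comp_mul_left_iff
      (fun x : ℝ => Real.exp (-x) * x ^ (s+1-1)) 0 hs).mpr (by simpa using h0)
    have h2 : IntegrableOn
        (fun x : ℝ => (s ^ (s+1-1))⁻¹ * (Real.exp (-(s*x)) * (s*x) ^ (s+1-1))) (Ioi 0) :=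
      h1.const_mul _
    refine h2.congr_fun ?_ measurableSet_Ioi
    intro t ht
    have hst : (s * t) ^ (s+1-1) = s ^ (s+1-1) * t ^ (s+1-1) :=
      Real.mul_rpow hs.le (le_of_lt ht)
    have hsne : s ^ (s+1-1) ≠ 0 := (Real.rpow_pos_of_pos hs _).ne'
    field_simp [hst]
    rw [Real.mul_rpow hs.le (le_of_lt ht)]
  have hmeas : MeasurableSet (Ioi (0:ℝ)) := measurableSet_Ioi
  constructor
  · rw [← exp_neg_image_Ioi,
      integrableOn_image_iff_integrableOn_abs_deriv_smul hmeas hf' hinj]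
    exact (hint.congr_fun (fun t ht => (hpt t ht).symm) hmeas)
  · rw [← exp_neg_image_Ioi,
      integral_image_eq_integral_abs_deriv_smul hmeas hf' hinj,
      setIntegral_congr_fun hmeas hpt,
      Real.integral_rpow_mul_exp_neg_mul_Ioi (by linarith) hs]

/-- Proposition 3.2: on a complete manifold of nonnegative Ricci curvature (encoded via the
Bishop–Gromov package) regarded as a static super Ricci flow,
`I_{(p,0)}(r) = (1/rⁿ) ∫₀^{r²/(4π)} (n/(2τ)) Vol B(p, √(2nτ log(r²/(4πτ)))) dτ`
and `lim_{r→∞} I_{(p,0)}(r) = ν(g)`. -/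
theorem stmt9 {M : Type*} [MetricSpace M] [CompleteSpace M] [MeasurableSpace M] [BorelSpace M]
    (n : ℕ) (hn : 1 ≤ n) (μ : Measure M)
    (ω : ℝ) (hω : ω = π ^ ((n:ℝ)/2) / Real.Gamma ((n:ℝ)/2 + 1))
    (hRicciNonnegBG : ∀ p : M,
      AntitoneOn (fun r => (μ (ball p r)).toReal / (ω * r^n)) (Ioi 0))
    (hsmallScale : ∀ p : M,
      Tendsto (fun r => (μ (ball p r)).toReal / (ω * r^n)) (nhdsWithin 0 (Ioi 0)) (nhds 1))
    (p : M) (ν : ℝ)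
    (hν : Tendsto (fun r => (μ (ball p r)).toReal / (ω * r^n)) atTop (nhds ν)) :
    (∀ r : ℝ, 0 < r → staticI n μ p r
        = (1 / r^n) * ∫ τ in Ioo (0:ℝ) (r^2 / (4 * π)), ((n:ℝ) / (2 * τ)) *
            (μ (ball p (Real.sqrt (2 * n * τ * Real.log (r^2 / (4 * π * τ)))))).toReal)
    ∧ Tendsto (staticI n μ p) atTop (nhds ν) := by
  have hπ : (0:ℝ) < π := Real.pi_pos
  have hn0 : (0:ℝ) < n := by exact_mod_cast hn
  set s : ℝ := (n:ℝ)/2 with hs_def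
  have hs : 0 < s := by positivity
  have hΓ : 0 < Real.Gamma (s+1) := Real.Gamma_pos_of_pos (by linarith)
  have hω0 : 0 < ω := by rw [hω]; positivity
  -- volume of balls is at most Euclidean
  have hVle : ∀ t : ℝ, 0 < t → (μ (ball p t)).toReal ≤ ω * t^n := by
    intro t ht
    have hmono := hRicciNonnegBG p
    have hle1 : (μ (ball p t)).toReal / (ω * t^n) ≤ 1 := by
      have hev : ∀ᶠ x in nhdsWithin (0:ℝ) (Ioi 0),
          (μ (ball p t)).toReal / (ω * t^n) ≤ (μ (ball p x)).toReal / (ω * x^n) := by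
        filter_upwards [Ioo_mem_nhdsGT_of_mem (show (0:ℝ) ∈ Ico 0 t from ⟨le_refl 0, ht⟩)]
          with x hx
        exact hmono hx.1 ht hx.2.le
      exact ge_of_tendsto (hsmallScale p) hev
    have hpos : 0 < ω * t^n := by positivity
    calc (μ (ball p t)).toReal = ((μ (ball p t)).toReal / (ω * t^n)) * (ω * t^n) := by
          field_simp
      _ ≤ 1 * (ω * t^n) := mul_le_mul_of_nonneg_right hle1 hpos.le
      _ = ω * t^n := one_mul _
  -- the profile function
  set c : ℝ → ℝ := fun u => Real.sqrt (((n:ℝ)/(2*π)) * (u * (-Real.log u))) with hc_def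
  have hcpos : ∀ u : ℝ, u ∈ Ioo (0:ℝ) 1 → 0 < c u := by
    rintro u ⟨h0, h1⟩
    have hL : 0 < -Real.log u := neg_pos.mpr (Real.log_neg h0 h1)
    exact Real.sqrt_pos.mpr (mul_pos (div_pos hn0 (by positivity)) (mul_pos h0 hL))
  -- Part 1
  have part1 : ∀ r : ℝ, 0 < r → staticI n μ p r
      = (1 / r^n) * ∫ τ in Ioo (0:ℝ) (r^2 / (4 * π)), ((n:ℝ) / (2 * τ)) *
          (μ (ball p (Real.sqrt (2 * n * τ * Real.log (r^2 / (4 * π * τ)))))).toReal := by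
    intro r hr
    have ha : 0 < r^2/(4*π) := by positivity
    unfold staticI
    congr 1
    have hseteq : ∀ τ : ℝ, 0 < τ →
        {x : M | r ^ (-(n:ℝ)) < (4 * π * τ) ^ (-(n:ℝ)/2)
          * Real.exp (-(dist x p)^2 / (4 * τ))}
        = {x : M | (dist x p)^2 < 2 * n * τ * Real.log (r^2 / (4 * π * τ))} := by
      intro τ hτ
      have h4τ : (0:ℝ) < 4*τ := by positivity
      have hlog : Real.log (r^2/(4*π*τ)) = 2*Real.log r - Real.log (4*π*τ) := by
        rw [Real.log_div (by positivity) (by positivity), Real.log_pow]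
        push_cast; ring
      ext x
      simp only [mem_setOf_eq]
      rw [Real.rpow_def_of_pos hr, Real.rpow_def_of_pos (by positivity : (0:ℝ) < 4*π*τ),
        ← Real.exp_add, Real.exp_lt_exp, hlog,
        show 2*(n:ℝ)*τ*(2*Real.log r - Real.log (4*π*τ))
          = ((n:ℝ)*Real.log r - ((n:ℝ)/2)*Real.log (4*π*τ)) * (4*τ) from by ring,
        ← div_lt_iff₀ h4τ]
      constructor <;> intro h
      · rw [neg_div (4*τ) (dist x p ^ 2)] at h; linarith
      · rw [neg_div (4*τ) (dist x p ^ 2)]; linarith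
    calc (∫ τ in Ioi (0:ℝ), ((n:ℝ) / (2 * τ)) *
          (μ {x : M | r ^ (-(n:ℝ)) < (4 * π * τ) ^ (-(n:ℝ)/2)
            * Real.exp (-(dist x p)^2 / (4 * τ))}).toReal)
        = ∫ τ in Ioi (0:ℝ), (Ioo (0:ℝ) (r^2/(4*π))).indicator
            (fun τ => ((n:ℝ) / (2 * τ)) *
              (μ (ball p (Real.sqrt (2 * n * τ * Real.log (r^2 / (4 * π * τ)))))).toReal) τ := by
          apply setIntegral_congr_fun measurableSet_Ioi
          intro τ hτ
          have hτ0 : (0:ℝ) < τ := hτ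
          beta_reduce
          rw [hseteq τ hτ0]
          by_cases hlt : τ < r^2/(4*π)
          · rw [indicator_of_mem (show τ ∈ Ioo (0:ℝ) (r^2/(4*π)) from ⟨hτ0, hlt⟩)]
            congr 3
            have h4πτ : (0:ℝ) < 4*π*τ := by positivity
            have hr2 : 4*π*τ < r^2 := by
              have := (lt_div_iff₀ (by positivity : (0:ℝ) < 4*π)).mp hlt
              linarith
            have hW : 0 < 2*(n:ℝ)*τ*Real.log (r^2/(4*π*τ)) := by
              have hlp : 0 < Real.log (r^2/(4*π*τ)) :=
                Real.log_pos ((one_lt_div h4πτ).mpr hr2)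
              have : (0:ℝ) < 2*(n:ℝ)*τ := by positivity
              exact mul_pos this hlp
            ext x
            rw [mem_setOf_eq, mem_ball]
            exact (Real.lt_sqrt dist_nonneg).symm
          · rw [indicator_of_notMem (show τ ∉ Ioo (0:ℝ) (r^2/(4*π)) from fun hmem => hlt hmem.2)]
            have hge : r^2/(4*π) ≤ τ := le_of_not_gt hlt
            have hr2 : r^2 ≤ 4*π*τ := by
              have := (div_le_iff₀ (by positivity : (0:ℝ) < 4*π)).mp hge
              linarith
            have hWle : 2*(n:ℝ)*τ*Real.log (r^2/(4*π*τ)) ≤ 0 := by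
              have hln : Real.log (r^2/(4*π*τ)) ≤ 0 :=
                Real.log_nonpos (by positivity) ((div_le_one (by positivity)).mpr hr2)
              have : (0:ℝ) ≤ 2*(n:ℝ)*τ := by positivity
              exact mul_nonpos_of_nonneg_of_nonpos this hln
            have hempty : {x : M | (dist x p)^2 < 2*(n:ℝ)*τ*Real.log (r^2/(4*π*τ))} = ∅ := by
              ext x
              simp only [mem_setOf_eq, mem_empty_iff_false, iff_false, not_lt]
              exact hWle.trans (sq_nonneg _)
            rw [hempty]
            simp
      _ = ∫ τ in Ioi (0:ℝ) ∩ Ioo (0:ℝ) (r^2/(4*π)), ((n:ℝ) / (2 * τ)) *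
            (μ (ball p (Real.sqrt (2 * n * τ * Real.log (r^2 / (4 * π * τ)))))).toReal :=
          setIntegral_indicator measurableSet_Ioo
      _ = ∫ τ in Ioo (0:ℝ) (r^2/(4*π)), ((n:ℝ) / (2 * τ)) *
            (μ (ball p (Real.sqrt (2 * n * τ * Real.log (r^2 / (4 * π * τ)))))).toReal := by
          rw [inter_eq_self_of_subset_right Ioo_subset_Ioi_self]
  -- Part 2 : substitution τ = (r²/4π) u
  have part2 : ∀ r : ℝ, 0 < r → staticI n μ p r
      = ∫ u in Ioo (0:ℝ) 1, (1/r^n) * (((n:ℝ)/(2*u)) * (μ (ball p (r * c u))).toReal) := by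
    intro r hr
    have ha : 0 < r^2/(4*π) := by positivity
    set a : ℝ := r^2/(4*π) with ha_def
    have himg : (fun u : ℝ => a * u) '' Ioo 0 1 = Ioo 0 a := by
      rw [image_mul_left_Ioo ha]
      norm_num
    have hderiv : ∀ u ∈ Ioo (0:ℝ) 1, HasDerivWithinAt (fun u : ℝ => a * u) a (Ioo 0 1) u :=
      fun u _ => by simpa using ((hasDerivAt_id u).const_mul a).hasDerivWithinAt
    have hinj : InjOn (fun u : ℝ => a * u) (Ioo 0 1) :=
      fun x _ y _ hxy => mul_left_cancel₀ ha.ne' hxy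
    have hsub := integral_image_eq_integral_abs_deriv_smul measurableSet_Ioo hderiv hinj
      (fun τ => ((n:ℝ) / (2 * τ)) *
        (μ (ball p (Real.sqrt (2 * n * τ * Real.log (r^2 / (4 * π * τ)))))).toReal)
    rw [himg] at hsub
    rw [part1 r hr, hsub, ← MeasureTheory.integral_const_mul]
    apply setIntegral_congr_fun measurableSet_Ioo
    rintro u ⟨hu0, hu1⟩
    have hau : 0 < a * u := mul_pos ha hu0
    have hrad : Real.sqrt (2 * n * (a*u) * Real.log (r^2 / (4 * π * (a*u)))) = r * c u := by
      have hfrac : r^2 / (4 * π * (a*u)) = u⁻¹ := by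
        rw [ha_def]
        field_simp [hr.ne', hπ.ne', hu0.ne']
      rw [hfrac, Real.log_inv,
        show 2*(n:ℝ)*(a*u)*(-Real.log u) = r^2 * (((n:ℝ)/(2*π)) * (u * (-Real.log u))) from by
          rw [ha_def]; field_simp; ring,
        Real.sqrt_mul (sq_nonneg r), Real.sqrt_sq hr.le, hc_def]
    beta_reduce
    have hcoef : a * ((n:ℝ)/(2*(a*u))) = (n:ℝ)/(2*u) := by
      field_simp
    rw [smul_eq_mul, abs_of_pos ha, hrad, ← mul_assoc a, hcoef]
  -- measurability
  have hVmeas : Measurable (fun t : ℝ => (μ (ball p t)).toReal) := by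
    have hmono : Monotone (fun t : ℝ => μ (ball p t)) :=
      fun t t' h => measure_mono (ball_subset_ball h)
    exact hmono.measurable.ennreal_toReal
  have hcmeas : Measurable c := by
    rw [hc_def]
    exact Real.continuous_sqrt.measurable.comp
      (measurable_const.mul (measurable_id.mul Real.measurable_log.neg))
  -- the dominating function
  set B : ℝ → ℝ := fun u => ((n:ℝ)/(2*u)) * (ω * c u ^ n) with hB_def
  have hBeq : ∀ u ∈ Ioo (0:ℝ) 1,
      B u = (ω * ((n:ℝ)/(2*π))^s * s) * (u^(s-1) * (-Real.log u)^s) := by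
    rintro u ⟨hu0, hu1⟩
    have hL : 0 ≤ -Real.log u := (neg_pos.mpr (Real.log_neg hu0 hu1)).le
    have hin : (0:ℝ) ≤ ((n:ℝ)/(2*π)) * (u * (-Real.log u)) := by positivity
    have hcn : c u ^ n = ((n:ℝ)/(2*π))^s * (u^s * (-Real.log u)^s) := by
      rw [hc_def]
      beta_reduce
      rw [Real.sqrt_eq_rpow, ← Real.rpow_natCast (_ ^ (1/(2:ℝ))) n, ← Real.rpow_mul hin,
        show (1/(2:ℝ)) * (n:ℕ) = s from by rw [hs_def]; ring,
        Real.mul_rpow (by positivity) (mul_nonneg hu0.le hL),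
        Real.mul_rpow hu0.le hL]
    rw [hB_def]
    beta_reduce
    rw [hcn, Real.rpow_sub_one hu0.ne']
    field_simp
    ring
  have hBint : IntegrableOn B (Ioo (0:ℝ) 1) := by
    have h : IntegrableOn
        (fun u : ℝ => (ω * ((n:ℝ)/(2*π))^s * s) * (u^(s-1) * (-Real.log u)^s))
        (Ioo (0:ℝ) 1) :=
      (key_integral s hs).1.const_mul _
    exact h.congr_fun (fun u hu => (hBeq u hu).symm) measurableSet_Ioo
  have hBval : ∫ u in Ioo (0:ℝ) 1, B u = 1 := by
    rw [setIntegral_congr_fun measurableSet_Ioo hBeq, MeasureTheory.integral_const_mul,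
      (key_integral s hs).2]
    have key : ((n:ℝ)/(2*π))^s * ((1/s)^(s+1)) = (1/π)^s * (1/s) := by
      rw [Real.rpow_add (show (0:ℝ) < 1/s by positivity) s 1, Real.rpow_one, ← mul_assoc,
        ← Real.mul_rpow (by positivity) (by positivity),
        show (n:ℝ)/(2*π) * (1/s) = 1/π from by rw [hs_def]; field_simp]
    calc ω * ((n:ℝ)/(2*π))^s * s * ((1/s)^(s+1) * Real.Gamma (s+1))
        = ω * (((n:ℝ)/(2*π))^s * (1/s)^(s+1)) * s * Real.Gamma (s+1) := by ring
      _ = ω * ((1/π)^s * (1/s)) * s * Real.Gamma (s+1) := by rw [key]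
      _ = 1 := by
          rw [hω, one_div π, Real.inv_rpow hπ.le]
          field_simp
  -- pointwise limits
  have hlim : ∀ u ∈ Ioo (0:ℝ) 1,
      Tendsto (fun r : ℝ => (1/r^n) * (((n:ℝ)/(2*u)) * (μ (ball p (r * c u))).toReal))
        atTop (nhds (ν * B u)) := by
    rintro u hu
    obtain ⟨hu0, hu1⟩ := hu
    have hcu : 0 < c u := hcpos u ⟨hu0, hu1⟩
    have h1 : Tendsto (fun r : ℝ => r * c u) atTop atTop :=
      Tendsto.atTop_mul_const hcu tendsto_id
    have h2 : Tendsto (fun r : ℝ =>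
        (μ (ball p (r * c u))).toReal / (ω * (r * c u)^n)) atTop (nhds ν) := hν.comp h1
    have h3 := h2.mul_const (B u)
    refine Tendsto.congr' ?_ h3
    filter_upwards [eventually_gt_atTop (0:ℝ)] with r hr
    rw [hB_def]
    beta_reduce
    rw [mul_pow]
    field_simp
  -- dominated convergence
  have hdct := MeasureTheory.tendsto_integral_filter_of_dominated_convergence
    (μ := volume.restrict (Ioo (0:ℝ) 1)) (l := atTop)
    (F := fun (r : ℝ) u => (1/r^n) * (((n:ℝ)/(2*u)) * (μ (ball p (r * c u))).toReal))
    (f := fun u => ν * B u) B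
    (Eventually.of_forall (fun r => by
      exact (measurable_const.mul ((measurable_const.div
        (measurable_const.mul measurable_id)).mul
        (hVmeas.comp (measurable_const.mul hcmeas)))).aestronglyMeasurable))
    (by
      filter_upwards [eventually_gt_atTop (0:ℝ)] with r hr
      rw [ae_restrict_iff' measurableSet_Ioo]
      refine Eventually.of_forall (fun u hu => ?_)
      obtain ⟨hu0, hu1⟩ := hu
      have hcu : 0 < c u := hcpos u ⟨hu0, hu1⟩
      have hrc : 0 < r * c u := mul_pos hr hcu
      have hFnn : 0 ≤ (1/r^n) * (((n:ℝ)/(2*u)) * (μ (ball p (r * c u))).toReal) :=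
        mul_nonneg (by positivity) (mul_nonneg (by positivity) ENNReal.toReal_nonneg)
      rw [Real.norm_eq_abs, abs_of_nonneg hFnn, hB_def]
      beta_reduce
      calc (1/r^n) * (((n:ℝ)/(2*u)) * (μ (ball p (r * c u))).toReal)
          ≤ (1/r^n) * (((n:ℝ)/(2*u)) * (ω * (r * c u)^n)) := by
            refine mul_le_mul_of_nonneg_left
              (mul_le_mul_of_nonneg_left (hVle _ hrc) (by positivity)) (by positivity)
        _ = ((n:ℝ)/(2*u)) * (ω * c u ^ n) := by
            rw [mul_pow]
            field_simp)
    hBint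
    (by
      rw [ae_restrict_iff' measurableSet_Ioo]
      exact Eventually.of_forall hlim)
  have hval : ∫ u in Ioo (0:ℝ) 1, ν * B u = ν := by
    rw [MeasureTheory.integral_const_mul, hBval, mul_one]
  rw [hval] at hdct
  refine ⟨part1, ?_⟩
  refine Tendsto.congr' ?_ hdct
  filter_upwards [eventually_gt_atTop (0:ℝ)] with r hr
  exact (part2 r hr).symm
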